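/- The trilinear map Q² satisfies the two naturality conditions Q²(x, y, φz) − Q²(x, φy, z) = F(x, y, z) and Q²(x, y, z) = −Q²(x, z, y) for all x, y, z ∈ V; hence Q² is the potential of a natural connection (the second natural connection) on the Riemannian Π-structure. -/
import Mathlib


open scoped RealInnerProductSpace

noncomputable section

variable {V : Type*} [NormedAddCommGroup V] [InnerProductSpace ℝ V]

/-- A Riemannian Π-structure on a real inner product space `V`:
a linear map `phi`, a vector `xi` (with dual form `η x = ⟪x, xi⟫`) satisfying
the defining algebraic identities. -/
structure PiStruct (V : Type*) [NormedAddCommGroup V] [InnerProductSpace ℝ V] where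
  phi : V →ₗ[ℝ] V
  xi : V
  phi_xi : phi xi = 0
  phi_phi : ∀ x : V, phi (phi x) = x - (⟪x, xi⟫ : ℝ) • xi
  eta_phi : ∀ x : V, ⟪phi x, xi⟫ = 0
  eta_xi : ⟪xi, xi⟫ = (1 : ℝ)
  g_phi_phi : ∀ x y : V, ⟪phi x, phi y⟫ = ⟪x, y⟫ - ⟪x, xi⟫ * ⟪y, xi⟫
  g_phi_symm : ∀ x y : V, ⟪phi x, y⟫ = ⟪x, phi y⟫

/-- Trilinear real-valued maps on `V`. -/
abbrev Tri (V : Type*) [NormedAddCommGroup V] [InnerProductSpace ℝ V] :=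
  V →ₗ[ℝ] V →ₗ[ℝ] V →ₗ[ℝ] ℝ

/-- The 1-form `η(x) = g(x, ξ)`. -/
def PiStruct.eta (P : PiStruct V) (x : V) : ℝ := ⟪x, P.xi⟫

/-- `F` is a fundamental tensor for the Π-structure `P`. -/
def IsFund (P : PiStruct V) (F : Tri V) : Prop :=
  (∀ x y z : V, F x y z = F x z y) ∧
  (∀ x y z : V, F x y z =
    -F x (P.phi y) (P.phi z) + P.eta y * F x P.xi z + P.eta z * F x y P.xi)

/-- The Nijenhuis tensor of `F`. -/
def Nij (P : PiStruct V) (F : Tri V) (x y z : V) : ℝ :=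
  F (P.phi x) y z - F (P.phi y) x z - F x y (P.phi z) + F y x (P.phi z)
    + P.eta z * (F x (P.phi y) P.xi - F y (P.phi x) P.xi)

/-- The potential of the first natural connection. -/
def Q1 (P : PiStruct V) (F : Tri V) (x y z : V) : ℝ :=
  -(1/2) * F x (P.phi y) z - (1/2) * P.eta z * F x (P.phi y) P.xi
    + P.eta y * F x (P.phi z) P.xi

/-- The potential of the second natural connection. -/
def Q2 (P : PiStruct V) (F : Tri V) (x y z : V) : ℝ :=
  Q1 P F x y z - (1/8) * (Nij P F (P.phi (P.phi z)) (P.phi (P.phi y)) (P.phi (P.phi x))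
    + 2 * P.eta x * Nij P F (P.phi z) (P.phi y) P.xi)

/-- The torsion tensor of the first natural connection. -/
def T1 (P : PiStruct V) (F : Tri V) (x y z : V) : ℝ :=
  -(1/2) * (F x (P.phi y) z - F y (P.phi x) z)
    - (1/2) * P.eta z * (F x (P.phi y) P.xi - F y (P.phi x) P.xi)
    + P.eta y * F x (P.phi z) P.xi - P.eta x * F y (P.phi z) P.xi

/-- The torsion tensor of the second natural connection. -/
def T2 (P : PiStruct V) (F : Tri V) (x y z : V) : ℝ :=
  Q2 P F x y z - Q2 P F y x z

/-- Identity (*) for a torsion-like tensor `T`. -/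
def StarId (P : PiStruct V) (T : V → V → V → ℝ) : Prop :=
  ∀ x y z : V,
    T x y z + T y z x + T (P.phi x) y (P.phi z) + T y (P.phi z) (P.phi x)
    - P.eta x * (T P.xi y z + T y z P.xi - P.eta y * T P.xi z P.xi)
    - P.eta y * (T x P.xi z + T P.xi z x + T (P.phi x) P.xi (P.phi z)
        + T P.xi (P.phi z) (P.phi x))
    - P.eta z * (T x y P.xi + T y P.xi x - P.eta y * T x P.xi P.xi) = 0

set_option maxHeartbeats 2000000 in
/-- `Q²` satisfies the two naturality conditions, hence is the potential of a
natural connection (the second natural connection). -/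
theorem Q2_is_natural_potential
    [FiniteDimensional ℝ V] (n : ℕ) (hn : 1 ≤ n)
    (hdim : Module.finrank ℝ V = 2 * n + 1)
    (P : PiStruct V) (F : Tri V) (hF : IsFund P F) :
    (∀ x y z : V, Q2 P F x y (P.phi z) - Q2 P F x (P.phi y) z = F x y z) ∧
    (∀ x y z : V, Q2 P F x y z = -Q2 P F x z y) := by
  obtain ⟨hsym, hF2⟩ := hF
  have hfund : ∀ a b c : V, F a (P.phi b) (P.phi c) =
      -F a b c + ⟪b, P.xi⟫ * F a P.xi c + ⟪c, P.xi⟫ * F a b P.xi := by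
    intro a b c
    have h := hF2 a b c
    simp only [PiStruct.eta] at h
    linarith
  have hxixi : ∀ a : V, F a P.xi P.xi = 0 := by
    intro a
    have h := hfund a P.xi P.xi
    rw [P.phi_xi] at h
    simp only [map_zero, LinearMap.zero_apply, P.eta_xi, one_mul] at h
    linarith
  have hfund2 : ∀ a b c : V, F a b (P.phi c) =
      -F a (P.phi b) c + ⟪b, P.xi⟫ * F a P.xi (P.phi c) + ⟪c, P.xi⟫ * F a (P.phi b) P.xi := by
    intro a b c
    have h := hfund a b (P.phi c)
    rw [P.phi_phi c] at h
    simp only [map_sub, map_smul, LinearMap.sub_apply, LinearMap.smul_apply, smul_eq_mul,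
      P.eta_phi, zero_mul, add_zero] at h
    linarith
  constructor
  · intro x y z
    simp only [Q2, Q1, Nij, PiStruct.eta, P.phi_phi, P.phi_xi, map_sub, map_smul, map_zero,
      LinearMap.sub_apply, LinearMap.smul_apply, LinearMap.zero_apply, smul_eq_mul, smul_zero,
      sub_zero, inner_sub_left, real_inner_smul_left, P.eta_phi, P.eta_xi, mul_one, mul_zero,
      zero_mul, sub_self, add_zero, zero_sub]
    linear_combination
      (((-1 : ℝ)/2)) * (hfund x y z) +
      (((-3 : ℝ)/2) * ⟪y, P.xi⟫ * ⟪z, P.xi⟫) * (hxixi x) +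
      (((-1 : ℝ)/8)) * (hsym z y x) +
      (((1 : ℝ)/8) * ⟪y, P.xi⟫) * (hsym z P.xi x) +
      (((-1 : ℝ)/8) * ⟪x, P.xi⟫ * ⟪y, P.xi⟫) * (hxixi z) +
      (((1 : ℝ)/8) * ⟪z, P.xi⟫) * (hsym P.xi y x) +
      (((-1 : ℝ)/4) * ⟪y, P.xi⟫ * ⟪z, P.xi⟫) * (hsym P.xi P.xi x) +
      (((1 : ℝ)/4) * ⟪x, P.xi⟫ * ⟪y, P.xi⟫ * ⟪z, P.xi⟫) * (hxixi P.xi) +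
      (((1 : ℝ)/8)) * (hfund2 (P.phi z) y x) +
      (((-1 : ℝ)/8)) * (hsym y (P.phi z) (P.phi x)) +
      (((1 : ℝ)/8) * ⟪y, P.xi⟫) * (hsym P.xi (P.phi z) (P.phi x)) +
      (((-1 : ℝ)/8) * ⟪x, P.xi⟫ * ⟪z, P.xi⟫) * (hxixi y) +
      ((-1 : ℝ) * ⟪y, P.xi⟫) * (hsym x P.xi z) +
      (((-1 : ℝ)/8)) * (hsym y z x) +
      (((1 : ℝ)/8) * ⟪z, P.xi⟫) * (hsym y P.xi x) +
      (((1 : ℝ)/8) * ⟪y, P.xi⟫) * (hsym P.xi z x) +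
      (((-1 : ℝ)/8)) * (hsym z (P.phi y) (P.phi x)) +
      (((1 : ℝ)/8) * ⟪z, P.xi⟫) * (hsym P.xi (P.phi y) (P.phi x)) +
      (((1 : ℝ)/8)) * (hfund2 (P.phi y) z x) +
      (((-1 : ℝ)/8)) * (hfund y x z) +
      (((1 : ℝ)/8) * ⟪y, P.xi⟫) * (hfund P.xi x z) +
      (((-1 : ℝ)/8)) * (hfund z x y) +
      (((1 : ℝ)/8) * ⟪z, P.xi⟫) * (hfund P.xi x y) +
      (((-1 : ℝ)/8) * ⟪x, P.xi⟫) * (hsym y P.xi z) +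
      (((1 : ℝ)/8) * ⟪x, P.xi⟫ * ⟪y, P.xi⟫) * (hsym P.xi P.xi z) +
      (((-1 : ℝ)/8) * ⟪x, P.xi⟫) * (hsym z P.xi y) +
      (((1 : ℝ)/8) * ⟪x, P.xi⟫ * ⟪z, P.xi⟫) * (hsym P.xi P.xi y)
  · intro x y z
    simp only [Q2, Q1, Nij, PiStruct.eta, P.phi_phi, P.phi_xi, map_sub, map_smul, map_zero,
      LinearMap.sub_apply, LinearMap.smul_apply, LinearMap.zero_apply, smul_eq_mul, smul_zero,
      sub_zero, inner_sub_left, real_inner_smul_left, P.eta_phi, P.eta_xi, mul_one, mul_zero,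
      zero_mul, sub_self, add_zero, zero_sub]
    linear_combination
      (((-1 : ℝ)/2)) * (hsym x (P.phi y) z) +
      (((1 : ℝ)/2) * ⟪z, P.xi⟫) * (hsym x (P.phi y) P.xi) +
      (((-1 : ℝ)/2)) * (hfund2 x z y)
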